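/- Let Z be a binomial random variable with M trials and success probability q > 0. Then E[(1/Z)·1_{Z≥1}] ≤ 2/((M+1)q). -/

import Mathlib

/-- For `Z ~ Binomial(M, q)` with `M ≥ 1` and `0 < q ≤ 1`,
`E[(1/Z)·1_{Z ≥ 1}] ≤ 2/((M+1)q)`. The expectation is written out as the binomial sum. -/
theorem binomial_inverse_moment_bound (M : ℕ) (hM : 1 ≤ M) (q : ℝ) (hq : 0 < q) (hq1 : q ≤ 1) :
    ∑ k ∈ Finset.Icc 1 M, (1 / (k : ℝ)) * (M.choose k) * q ^ k * (1 - q) ^ (M - k)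
      ≤ 2 / (((M : ℝ) + 1) * q) := by
  have h1q : (0:ℝ) ≤ 1 - q := by linarith
  set f : ℕ → ℝ := fun j => ((M+1).choose j : ℝ) * q ^ j * (1 - q) ^ (M + 1 - j) with hf
  have hfnn : ∀ j, 0 ≤ f j := fun j => by positivity
  have hMq : (0:ℝ) < ((M:ℝ)+1) * q := by positivity
  -- termwise bound
  have hterm : ∀ k ∈ Finset.Icc 1 M,
      (1 / (k : ℝ)) * (M.choose k) * q ^ k * (1 - q) ^ (M - k)
        ≤ (2 / (((M:ℝ)+1) * q)) * f (k+1) := by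
    intro k hk
    simp only [Finset.mem_Icc] at hk
    obtain ⟨hk1, hkM⟩ := hk
    have hkpos : (0:ℝ) < k := by exact_mod_cast hk1
    have hnat : (M+1) * M.choose k ≤ 2 * k * ((M+1).choose (k+1)) := by
      have := Nat.add_one_mul_choose_eq M k
      calc (M+1) * M.choose k = (M+1).choose (k+1) * (k+1) := this
        _ ≤ (M+1).choose (k+1) * (2*k) := Nat.mul_le_mul_left _ (by omega)
        _ = 2 * k * ((M+1).choose (k+1)) := by ring
    have key : (1 / (k : ℝ)) * (M.choose k) ≤ (2 / (((M:ℝ)+1))) * ((M+1).choose (k+1)) := by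
      rw [one_div_mul_eq_div, div_mul_eq_mul_div, div_le_div_iff₀ hkpos (by positivity)]
      exact_mod_cast by linarith [hnat]
    have hsub : M + 1 - (k+1) = M - k := by omega
    have : f (k+1) = ((M+1).choose (k+1) : ℝ) * (q * q ^ k) * (1-q)^(M-k) := by
      rw [hf]; simp only [hsub, pow_succ]; ring
    rw [this]
    have hpow : (0:ℝ) ≤ q ^ k * (1-q)^(M-k) := by positivity
    calc (1 / (k : ℝ)) * (M.choose k) * q ^ k * (1 - q) ^ (M - k)
        = ((1 / (k : ℝ)) * (M.choose k)) * (q ^ k * (1-q)^(M-k)) := by ring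
      _ ≤ ((2 / (((M:ℝ)+1))) * ((M+1).choose (k+1))) * (q ^ k * (1-q)^(M-k)) :=
          mul_le_mul_of_nonneg_right key hpow
      _ = (2 / (((M:ℝ)+1) * q)) * (((M+1).choose (k+1) : ℝ) * (q * q ^ k) * (1-q)^(M-k)) := by
          field_simp
  have hsum1 : ∑ k ∈ Finset.Icc 1 M, f (k+1) ≤ 1 := by
    have himg : ∑ k ∈ Finset.Icc 1 M, f (k+1)
        = ∑ j ∈ (Finset.Icc 1 M).image (· + 1), f j := by
      rw [Finset.sum_image]
      intro a _ b _ h; simp only at h; omega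
    have hsub : (Finset.Icc 1 M).image (· + 1) ⊆ Finset.range (M+2) := by
      intro j hj
      simp only [Finset.mem_image, Finset.mem_Icc] at hj
      simp only [Finset.mem_range]; omega
    have hle : ∑ j ∈ (Finset.Icc 1 M).image (· + 1), f j ≤ ∑ j ∈ Finset.range (M+2), f j :=
      Finset.sum_le_sum_of_subset_of_nonneg hsub (fun j _ _ => hfnn j)
    have hbin : ∑ j ∈ Finset.range (M+2), f j = 1 := by
      have := add_pow q (1-q) (M+1)
      simp only [add_sub_cancel, one_pow] at this
      rw [hf]
      calc ∑ j ∈ Finset.range (M+2), ((M+1).choose j : ℝ) * q ^ j * (1 - q) ^ (M + 1 - j)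
          = ∑ j ∈ Finset.range (M+1+1), q ^ j * (1-q) ^ (M+1-j) * ((M+1).choose j) := by
            apply Finset.sum_congr rfl; intro j _; ring
        _ = 1 := by rw [← this]
    rw [himg]; linarith
  calc ∑ k ∈ Finset.Icc 1 M, (1 / (k : ℝ)) * (M.choose k) * q ^ k * (1 - q) ^ (M - k)
      ≤ ∑ k ∈ Finset.Icc 1 M, (2 / (((M:ℝ)+1) * q)) * f (k+1) := Finset.sum_le_sum hterm
    _ = (2 / (((M:ℝ)+1) * q)) * ∑ k ∈ Finset.Icc 1 M, f (k+1) := by rw [Finset.mul_sum]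
    _ ≤ (2 / (((M:ℝ)+1) * q)) * 1 := by
        apply mul_le_mul_of_nonneg_left hsum1 (by positivity)
    _ = 2 / (((M:ℝ)+1) * q) := mul_one _
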